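/- Let A be a unital Banach algebra and X a unit-linked Banach A-bimodule. Let p < 1 and θ ≥ 0. Suppose f : A → X satisfies f(0) = 0 and g : A → X satisfies g(0) = g(1) = 0, such that ‖f(a + λb + c²) − f(a) − λf(b) − c·f(c) − g(c)·c‖ ≤ θ‖f(c)‖ and ‖g(λab + λc) − λa·g(b) − λ·g(a)·b − λg(c)‖ ≤ θ(‖a‖^p + ‖b‖^p + ‖c‖^p) for all a, b, c ∈ A and all λ ∈ ℂ with |λ| = 1. Then the map δ(c) := lim_{n→∞} 2^{−n} g(2^n c) is a ℂ-linear Jordan derivation, i.e., δ(a²) = a·δ(a) + δ(a)·a for all a ∈ A. -/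

import Mathlib

open Filter Topology MulOpposite

set_option linter.unusedSectionVars false
set_option linter.unusedVariables false
set_option maxHeartbeats 1000000

private lemma aux_smul_comm' {B : Type*} [Ring B] {Y : Type*} [AddCommGroup Y]
    [Module ℂ B] [SMulCommClass ℂ B B] [IsScalarTower ℂ B B]
    [Module B Y] [Module ℂ Y] [IsScalarTower ℂ B Y] (μ : ℂ) (b : B) (y : Y) :
    b • (μ • y) = μ • (b • y) := by
  have h : (μ : ℂ) • y = (μ • (1:B)) • y := by rw [smul_assoc, one_smul]
  rw [h, ← mul_smul, mul_smul_comm, smul_assoc, mul_one]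

private lemma aux_add_zero {V W : Type*} [AddCommGroup V] [AddCommGroup W]
    (T : V → W) (hadd : ∀ x y, T (x + y) = T x + T y) : T 0 = 0 := by
  have := hadd 0 0; simpa using this.symm

private lemma aux_nsmul {V W : Type*} [AddCommGroup V] [Module ℂ V] [AddCommGroup W] [Module ℂ W]
    (T : V → W) (hadd : ∀ x y, T (x + y) = T x + T y) (n : ℕ) (x : V) :
    T ((n : ℂ) • x) = (n : ℂ) • T x := by
  induction n with
  | zero => simpa using aux_add_zero T hadd
  | succ k ih =>
    have : ((k:ℂ)+1) • x = (k:ℂ) • x + x := by rw [add_smul, one_smul]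
    push_cast
    rw [this, hadd, ih, add_smul, one_smul]

private lemma aux_clinear {V W : Type*} [AddCommGroup V] [Module ℂ V] [AddCommGroup W] [Module ℂ W]
    (T : V → W) (hadd : ∀ x y, T (x + y) = T x + T y)
    (hu : ∀ (μ : ℂ), ‖μ‖ = 1 → ∀ x, T (μ • x) = μ • T x) (μ : ℂ) (x : V) :
    T (μ • x) = μ • T x := by
  -- real scalars in [-1,1]
  have hsmall : ∀ (t : ℝ), |t| ≤ 1 → ∀ x : V, T ((t:ℂ) • x) = (t:ℂ) • T x := by
    intro t ht x
    set s : ℝ := Real.sqrt (1 - t^2) with hs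
    have hs2 : s^2 = 1 - t^2 := Real.sq_sqrt (by nlinarith [abs_nonneg t, sq_abs t])
    set ν : ℂ := ⟨t, s⟩ with hν
    set ν' : ℂ := ⟨t, -s⟩ with hν'
    have hnν : ‖ν‖ = 1 := by
      rw [Complex.norm_def, Complex.normSq_mk]
      rw [show t*t + s*s = 1 by nlinarith]
      exact Real.sqrt_one
    have hnν' : ‖ν'‖ = 1 := by
      rw [Complex.norm_def, Complex.normSq_mk]
      rw [show t*t + -s*-s = 1 by nlinarith]
      exact Real.sqrt_one
    have hsum : ν + ν' = ((2*t : ℝ) : ℂ) := by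
      apply Complex.ext <;> simp [hν, hν'] <;> ring
    have h2 : T (((2*t:ℝ):ℂ) • x) = ((2*t:ℝ):ℂ) • T x := by
      rw [← hsum, add_smul, hadd, hu ν hnν, hu ν' hnν', ← add_smul]
    have hsplit : ((2*t:ℝ):ℂ) = (2:ℂ) * (t:ℂ) := by push_cast; ring
    rw [hsplit, mul_smul, mul_smul] at h2
    have h2' : T ((2:ℂ) • ((t:ℂ) • x)) = (2:ℂ) • T ((t:ℂ) • x) := by
      simpa using aux_nsmul T hadd 2 ((t:ℂ) • x)
    rw [h2'] at h2
    exact smul_right_injective W (by norm_num) h2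
  -- all real scalars
  have hreal : ∀ (t : ℝ) (x : V), T ((t:ℂ) • x) = (t:ℂ) • T x := by
    intro t x
    obtain ⟨n, hn⟩ := exists_nat_ge |t|
    have hn1 : (1:ℝ) ≤ (n+1 : ℕ) := by exact_mod_cast Nat.succ_le_succ (Nat.zero_le n)
    have hn0 : (0:ℝ) < (n+1 : ℕ) := lt_of_lt_of_le one_pos hn1
    have habs : |t / (n+1 : ℕ)| ≤ 1 := by
      rw [abs_div, abs_of_pos hn0, div_le_one hn0]
      calc |t| ≤ n := hn
        _ ≤ (n+1:ℕ) := by push_cast; linarith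
    have hne : ((n:ℂ) + 1) ≠ 0 := by
      have : ((n:ℂ) + 1) = ((n+1 : ℕ) : ℂ) := by push_cast; ring
      rw [this]; exact_mod_cast Nat.succ_ne_zero n
    have hdec : (t:ℂ) • x = ((n+1 : ℕ):ℂ) • (((t / (n+1:ℕ) : ℝ):ℂ) • x) := by
      rw [smul_smul]
      congr 1
      push_cast
      rw [mul_comm, div_mul_cancel₀ _ hne]
    rw [hdec, aux_nsmul T hadd, hsmall _ habs, smul_smul]
    congr 1
    push_cast
    rw [mul_comm, div_mul_cancel₀ _ hne]
  -- general complex scalar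
  have hI : T (Complex.I • x) = Complex.I • T x := hu Complex.I Complex.norm_I x
  have hdec : μ • x = ((μ.re : ℝ):ℂ) • x + ((μ.im : ℝ):ℂ) • (Complex.I • x) := by
    rw [smul_smul, ← add_smul]
    congr 1
    simpa using (Complex.re_add_im μ)
  rw [hdec, hadd, hreal, hreal, hI, smul_smul, ← add_smul]
  congr 1
  simpa using (Complex.re_add_im μ).symm

private lemma aux_eq_of_tendsto {X : Type*} [NormedAddCommGroup X] {u : ℕ → X} {x L : X}
    (hu : Tendsto u atTop (𝓝 L)) (b : ℕ → ℝ) (hb : Tendsto b atTop (𝓝 0))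
    (h : ∀ n, ‖x - u n‖ ≤ b n) : x = L := by
  refine tendsto_nhds_unique ?_ hu
  have : Tendsto (fun n => ‖u n - x‖) atTop (𝓝 0) := by
    refine squeeze_zero (fun n => norm_nonneg _) (fun n => ?_) hb
    rw [norm_sub_rev]; exact h n
  rw [show x = x by rfl]
  exact tendsto_const_nhds.congr_dist (by simpa [dist_eq_norm, norm_sub_rev] using this)

section

variable {A X : Type*}
  [NormedRing A] [NormedAlgebra ℂ A] [CompleteSpace A]
  [NormedAddCommGroup X] [NormedSpace ℂ X] [CompleteSpace X]
  [Module A X] [Module Aᵐᵒᵖ X]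
  [IsBoundedSMul A X] [IsBoundedSMul Aᵐᵒᵖ X]
  [SMulCommClass A Aᵐᵒᵖ X]
  [IsScalarTower ℂ A X] [IsScalarTower ℂ Aᵐᵒᵖ X]

/-- A Jordan derivation from `A` into the bimodule `X`: a `ℂ`-linear map `δ` with
`δ(a²) = a·δ(a) + δ(a)·a`. -/
def IsJordanDeriv (δ : A → X) : Prop :=
  (∀ x y : A, δ (x + y) = δ x + δ y) ∧ (∀ (μ : ℂ) (x : A), δ (μ • x) = μ • δ x) ∧
    ∀ a : A, δ (a ^ 2) = a • δ a + op a • δ a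

/-- A generalized Jordan derivation: a `ℂ`-linear map `d` such that there is a Jordan
derivation `δ` with `d(a²) = a·d(a) + δ(a)·a`. -/
def IsGenJordanDeriv (d : A → X) : Prop :=
  (∀ x y : A, d (x + y) = d x + d y) ∧ (∀ (μ : ℂ) (x : A), d (μ • x) = μ • d x) ∧
    ∃ δ : A → X, IsJordanDeriv δ ∧ ∀ a : A, d (a ^ 2) = a • d a + op a • δ a

theorem stmt (f g : A → X) (θ p : ℝ) (hθ : 0 ≤ θ) (hp : p < 1)
    (hf0 : f 0 = 0) (hg0 : g 0 = 0) (hg1 : g 1 = 0)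
    (h1 : ∀ (a b c : A) (μ : ℂ), ‖μ‖ = 1 →
      ‖f (a + μ • b + c ^ 2) - f a - μ • f b - c • f c - op c • g c‖ ≤ θ * ‖f c‖)
    (h2 : ∀ (a b c : A) (μ : ℂ), ‖μ‖ = 1 →
      ‖g (μ • (a * b) + μ • c) - μ • a • g b - μ • op b • g a - μ • g c‖ ≤
        θ * (‖a‖ ^ p + ‖b‖ ^ p + ‖c‖ ^ p)) :
    ∃ δ : A → X, (∀ c : A, Tendsto (fun n : ℕ => ((2 : ℂ) ^ n)⁻¹ • g ((2 : ℂ) ^ n • c)) atTop (𝓝 (δ c))) ∧ IsJordanDeriv δ := by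
  haveI : Nonempty X := ⟨0⟩
  set q : ℝ := (2:ℝ) ^ p with hqdef
  have hq0 : 0 ≤ q := Real.rpow_nonneg (by norm_num) p
  set r : ℝ := max 2⁻¹ (q / 2) with hrdef
  have hr0 : (0:ℝ) ≤ r := le_trans (by norm_num) (le_max_left _ _)
  have hq2 : q < 2 := by
    have : (2:ℝ) ^ p < (2:ℝ) ^ (1:ℝ) := Real.rpow_lt_rpow_of_exponent_lt (by norm_num) hp
    simpa [Real.rpow_one] using this
  have hr1 : r < 1 := max_lt (by norm_num) (by linarith [hq2])
  set K : ℝ := ‖(1:A)‖ ^ p with hKdef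
  have hK0 : 0 ≤ K := Real.rpow_nonneg (norm_nonneg _) p
  set Z : ℝ := (0:ℝ) ^ p with hZdef
  have hZ0 : 0 ≤ Z := Real.rpow_nonneg le_rfl p
  -- norm computations
  have hdn : ∀ (n:ℕ) (v : X), ‖((2:ℂ)^n)⁻¹ • v‖ = ((2:ℝ)^n)⁻¹ * ‖v‖ := by
    intro n v
    rw [norm_smul, norm_inv, norm_pow]
    norm_num
  have hns : ∀ (n:ℕ) (c:A), ‖(2:ℂ)^n • c‖ = 2^n * ‖c‖ := by
    intro n c
    rw [norm_smul, norm_pow]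
    norm_num
  have hqp : ∀ (n:ℕ) (c:A), ‖(2:ℂ)^n • c‖ ^ p = q^n * ‖c‖^p := by
    intro n c
    rw [hns, Real.mul_rpow (by positivity) (norm_nonneg c)]
    congr 1
    rw [← Real.rpow_natCast 2 n, ← Real.rpow_mul (by norm_num), mul_comm,
      Real.rpow_mul (by norm_num), Real.rpow_natCast]
  -- the universal arithmetic bound
  have hbound : ∀ (n : ℕ) (C₁ C₂ : ℝ), 0 ≤ C₁ → 0 ≤ C₂ →
      ((2:ℝ)^n)⁻¹ * (θ * (C₁ + C₂ * q^n)) ≤ θ * (C₁ + C₂) * r^n := by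
    intro n C₁ C₂ h1' h2'
    have ht : ((2:ℝ)^n)⁻¹ ≤ r^n := by
      rw [← inv_pow]
      exact pow_le_pow_left₀ (by norm_num) (le_max_left _ _) n
    have hs : ((2:ℝ)^n)⁻¹ * q^n ≤ r^n := by
      rw [← inv_pow, ← mul_pow]
      refine pow_le_pow_left₀ (by positivity) ?_ n
      calc 2⁻¹ * q = q / 2 := by ring
        _ ≤ r := le_max_right _ _
    have e1 : (θ * C₁) * ((2:ℝ)^n)⁻¹ ≤ (θ * C₁) * r^n :=
      mul_le_mul_of_nonneg_left ht (by positivity)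
    have e2 : (θ * C₂) * (((2:ℝ)^n)⁻¹ * q^n) ≤ (θ * C₂) * r^n :=
      mul_le_mul_of_nonneg_left hs (by positivity)
    nlinarith [e1, e2]
  -- basic consequences of h2
  have hA : ∀ b c : A, ‖g (b + c) - g b - g c‖ ≤ θ * (K + ‖b‖^p + ‖c‖^p) := by
    intro b c
    have := h2 1 b c 1 norm_one
    simpa [hg1] using this
  have hM : ∀ a b : A, ‖g (a*b) - a • g b - op b • g a‖ ≤ θ * (‖a‖^p + ‖b‖^p + Z) := by
    intro a b
    have := h2 a b 0 1 norm_one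
    simpa [hg0] using this
  have hU : ∀ (μ:ℂ), ‖μ‖ = 1 → ∀ c : A, ‖g (μ•c) - μ • g c‖ ≤ θ * (Z + Z + ‖c‖^p) := by
    intro μ hμ c
    have := h2 0 0 c μ hμ
    simpa [hg0] using this
  -- Cauchy sequence and definition of δ
  have hcs : ∀ c : A, CauchySeq (fun n : ℕ => ((2:ℂ)^n)⁻¹ • g ((2:ℂ)^n • c)) := by
    intro c
    apply cauchySeq_of_le_geometric r (θ * (K + (‖c‖^p + ‖c‖^p))) hr1
    intro n
    rw [dist_eq_norm]
    have key : ((2:ℂ)^n)⁻¹ • g ((2:ℂ)^n • c) - ((2:ℂ)^(n+1))⁻¹ • g ((2:ℂ)^(n+1) • c)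
        = ((2:ℂ)^(n+1))⁻¹ • ((2:ℂ) • g ((2:ℂ)^n • c) - g ((2:ℂ)^(n+1) • c)) := by
      rw [smul_sub, smul_smul]
      have h2n : ((2:ℂ)^(n+1))⁻¹ * 2 = ((2:ℂ)^n)⁻¹ := by
        have : ((2:ℂ)^n) ≠ 0 := pow_ne_zero n two_ne_zero
        field_simp [pow_succ]
        ring
      rw [h2n]
    rw [key, hdn]
    have hy : (2:ℂ)^(n+1) • c = (2:ℂ)^n • c + (2:ℂ)^n • c := by
      rw [pow_succ, mul_comm, mul_smul, two_smul]
    set y : A := (2:ℂ)^n • c with hydef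
    have hnorm2 : ‖(2:ℂ) • g y - g ((2:ℂ)^(n+1) • c)‖ = ‖g (y + y) - g y - g y‖ := by
      rw [hy,
        show (2:ℂ) • g y - g (y + y) = -(g (y + y) - g y - g y) by rw [two_smul]; abel,
        norm_neg]
    rw [hnorm2]
    calc ((2:ℝ)^(n+1))⁻¹ * ‖g (y + y) - g y - g y‖
        ≤ ((2:ℝ)^(n+1))⁻¹ * (θ * (K + ‖y‖^p + ‖y‖^p)) := by
          exact mul_le_mul_of_nonneg_left (hA y y) (by positivity)
      _ ≤ ((2:ℝ)^n)⁻¹ * (θ * (K + (‖c‖^p + ‖c‖^p) * q^n)) := by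
          have h1' : ((2:ℝ)^(n+1))⁻¹ ≤ ((2:ℝ)^n)⁻¹ := by
            apply inv_anti₀ (by positivity)
            exact pow_le_pow_right₀ (by norm_num) (Nat.le_succ n)
          have h2' : θ * (K + ‖y‖^p + ‖y‖^p) = θ * (K + (‖c‖^p + ‖c‖^p) * q^n) := by
            rw [hydef, hqp]; ring
          rw [h2']
          exact mul_le_mul_of_nonneg_right h1' (by positivity)
      _ ≤ θ * (K + (‖c‖^p + ‖c‖^p)) * r^n := hbound n K (‖c‖^p + ‖c‖^p) hK0 (by positivity)
  -- definition of δ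
  set δ : A → X := fun c => limUnder atTop (fun n : ℕ => ((2:ℂ)^n)⁻¹ • g ((2:ℂ)^n • c)) with hδdef
  have hδ : ∀ c : A, Tendsto (fun n : ℕ => ((2:ℂ)^n)⁻¹ • g ((2:ℂ)^n • c)) atTop (𝓝 (δ c)) :=
    fun c => (hcs c).tendsto_limUnder
  have hgeo : ∀ C : ℝ, Tendsto (fun n : ℕ => C * r^n) atTop (𝓝 0) := by
    intro C
    have := (tendsto_pow_atTop_nhds_zero_of_lt_one hr0 hr1).const_mul C
    simpa using this
  have hlim : ∀ (u v : ℕ → X) (L : X) (C : ℝ), Tendsto u atTop (𝓝 L) →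
      (∀ n, ‖u n - v n‖ ≤ C * r^n) → Tendsto v atTop (𝓝 L) := by
    intro u v L C hu h
    exact hu.congr_dist (squeeze_zero (fun n => dist_nonneg)
      (fun n => by rw [dist_eq_norm]; exact h n) (hgeo C))
  -- additivity of δ
  have hδadd : ∀ b c : A, δ (b + c) = δ b + δ c := by
    intro b c
    refine tendsto_nhds_unique (hδ (b+c)) (hlim _ _ _ (θ * (K + (‖b‖^p + ‖c‖^p)))
      ((hδ b).add (hδ c)) ?_)
    intro n
    have key : (((2:ℂ)^n)⁻¹ • g ((2:ℂ)^n • b) + ((2:ℂ)^n)⁻¹ • g ((2:ℂ)^n • c))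
        - ((2:ℂ)^n)⁻¹ • g ((2:ℂ)^n • (b + c))
        = -(((2:ℂ)^n)⁻¹ • (g ((2:ℂ)^n • b + (2:ℂ)^n • c) - g ((2:ℂ)^n • b) - g ((2:ℂ)^n • c))) := by
      rw [smul_add, smul_sub, smul_sub]
      abel
    rw [key, norm_neg, hdn]
    calc ((2:ℝ)^n)⁻¹ * ‖g ((2:ℂ)^n • b + (2:ℂ)^n • c) - g ((2:ℂ)^n • b) - g ((2:ℂ)^n • c)‖
        ≤ ((2:ℝ)^n)⁻¹ * (θ * (K + (‖b‖^p + ‖c‖^p) * q^n)) := by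
          refine mul_le_mul_of_nonneg_left ?_ (by positivity)
          have := hA ((2:ℂ)^n • b) ((2:ℂ)^n • c)
          rw [hqp, hqp] at this
          calc ‖g ((2:ℂ)^n • b + (2:ℂ)^n • c) - g ((2:ℂ)^n • b) - g ((2:ℂ)^n • c)‖
              ≤ θ * (K + q^n * ‖b‖^p + q^n * ‖c‖^p) := this
            _ = θ * (K + (‖b‖^p + ‖c‖^p) * q^n) := by ring
      _ ≤ θ * (K + (‖b‖^p + ‖c‖^p)) * r^n := hbound n _ _ hK0 (by positivity)
  -- unit homogeneity of δ
  have hδunit : ∀ (μ : ℂ), ‖μ‖ = 1 → ∀ c : A, δ (μ • c) = μ • δ c := by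
    intro μ hμ c
    refine tendsto_nhds_unique (hδ (μ • c)) (hlim _ _ _ (θ * ((Z + Z) + ‖c‖^p))
      ((hδ c).const_smul μ) ?_)
    intro n
    have hcomm : (2:ℂ)^n • (μ • c) = μ • ((2:ℂ)^n • c) := smul_comm _ _ _
    have key : μ • (((2:ℂ)^n)⁻¹ • g ((2:ℂ)^n • c)) - ((2:ℂ)^n)⁻¹ • g ((2:ℂ)^n • (μ • c))
        = -(((2:ℂ)^n)⁻¹ • (g (μ • ((2:ℂ)^n • c)) - μ • g ((2:ℂ)^n • c))) := by
      rw [hcomm, smul_sub, smul_comm μ]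
      abel
    rw [key, norm_neg, hdn]
    calc ((2:ℝ)^n)⁻¹ * ‖g (μ • ((2:ℂ)^n • c)) - μ • g ((2:ℂ)^n • c)‖
        ≤ ((2:ℝ)^n)⁻¹ * (θ * ((Z + Z) + ‖c‖^p * q^n)) := by
          refine mul_le_mul_of_nonneg_left ?_ (by positivity)
          have := hU μ hμ ((2:ℂ)^n • c)
          rw [hqp] at this
          calc ‖g (μ • ((2:ℂ)^n • c)) - μ • g ((2:ℂ)^n • c)‖ ≤ θ * (Z + Z + q^n * ‖c‖^p) := this
            _ = θ * ((Z + Z) + ‖c‖^p * q^n) := by ring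
      _ ≤ θ * ((Z + Z) + ‖c‖^p) * r^n := hbound n _ _ (by positivity) (by positivity)
  -- full complex linearity
  have hδsmul : ∀ (μ : ℂ) (c : A), δ (μ • c) = μ • δ c :=
    fun μ c => aux_clinear δ hδadd hδunit μ c
  -- the multiplicative identity: δ (a*b) = a • δ b + op b • g a
  have hδmul : ∀ a b : A, δ (a * b) = a • δ b + op b • g a := by
    intro a b
    have hten : Tendsto (fun n : ℕ => a • (((2:ℂ)^n)⁻¹ • g ((2:ℂ)^n • b)) + op b • g a)
        atTop (𝓝 (a • δ b + op b • g a)) := ((hδ b).const_smul a).add_const _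
    refine tendsto_nhds_unique (hδ (a*b)) (hlim _ _ _ (θ * ((‖a‖^p + Z) + ‖b‖^p))
      hten ?_)
    intro n
    have e1 : (2:ℂ)^n • (a * b) = a * ((2:ℂ)^n • b) := (mul_smul_comm _ _ _).symm
    have e2 : a • (((2:ℂ)^n)⁻¹ • g ((2:ℂ)^n • b)) = ((2:ℂ)^n)⁻¹ • (a • g ((2:ℂ)^n • b)) :=
      aux_smul_comm' _ _ _
    have e3 : op b • g a = ((2:ℂ)^n)⁻¹ • (op ((2:ℂ)^n • b) • g a) := by
      rw [op_smul, smul_assoc, smul_smul]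
      rw [inv_mul_cancel₀ (pow_ne_zero n two_ne_zero), one_smul]
    have key : (a • (((2:ℂ)^n)⁻¹ • g ((2:ℂ)^n • b)) + op b • g a)
        - ((2:ℂ)^n)⁻¹ • g ((2:ℂ)^n • (a * b))
        = -(((2:ℂ)^n)⁻¹ • (g (a * ((2:ℂ)^n • b)) - a • g ((2:ℂ)^n • b)
            - op ((2:ℂ)^n • b) • g a)) := by
      rw [e1, e2]
      nth_rewrite 1 [e3]
      rw [smul_sub, smul_sub]
      abel
    rw [key, norm_neg, hdn]
    calc ((2:ℝ)^n)⁻¹ * ‖g (a * ((2:ℂ)^n • b)) - a • g ((2:ℂ)^n • b) - op ((2:ℂ)^n • b) • g a‖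
        ≤ ((2:ℝ)^n)⁻¹ * (θ * ((‖a‖^p + Z) + ‖b‖^p * q^n)) := by
          refine mul_le_mul_of_nonneg_left ?_ (by positivity)
          have := hM a ((2:ℂ)^n • b)
          rw [hqp] at this
          calc ‖g (a * ((2:ℂ)^n • b)) - a • g ((2:ℂ)^n • b) - op ((2:ℂ)^n • b) • g a‖
              ≤ θ * (‖a‖^p + q^n * ‖b‖^p + Z) := this
            _ = θ * ((‖a‖^p + Z) + ‖b‖^p * q^n) := by ring
      _ ≤ θ * ((‖a‖^p + Z) + ‖b‖^p) * r^n := hbound n _ _ (by positivity) (by positivity)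
  -- f is additive
  have hfadd : ∀ x y : A, f (x + y) = f x + f y := by
    intro x y
    have h := h1 x y 0 1 norm_one
    simp only [one_smul, hf0, smul_zero, zero_smul, sub_zero, pow_two, mul_zero, add_zero,
      norm_zero, op_zero] at h
    have h0 : f (x + y) - f x - f y = 0 := norm_le_zero_iff.mp h
    rw [sub_sub, sub_eq_zero] at h0
    exact h0
  have hfpow : ∀ (n : ℕ) (x : A), f ((2:ℂ)^n • x) = (2:ℂ)^n • f x := by
    intro n x
    have hcast : ((2:ℂ)^n) = (((2^n : ℕ) : ℂ)) := by push_cast; ring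
    rw [hcast]
    exact aux_nsmul f hfadd _ x
  have hnsX : ∀ (n : ℕ) (v : X), ‖(2:ℂ)^n • v‖ = 2^n * ‖v‖ := by
    intro n v
    rw [norm_smul, norm_pow]
    norm_num
  -- δ 1 = 0
  have hδ1 : δ 1 = 0 := by
    have hb : ∀ n : ℕ, ‖((2:ℂ)^n)⁻¹ • g ((2:ℂ)^n • (1:A))‖ ≤ (θ * ‖f 1‖) * r^n := by
      intro n
      have hc := h1 0 0 ((2:ℂ)^n • (1:A)) 1 norm_one
      simp only [zero_add, smul_zero, one_smul, hf0, sub_zero] at hc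
      have ha : ((2:ℂ)^n • (1:A))^2 = (2:ℂ)^n • ((2:ℂ)^n • (1:A)) := by
        rw [pow_two, smul_mul_assoc, one_mul]
      have hb1 : f (((2:ℂ)^n • (1:A))^2) = (2:ℂ)^n • ((2:ℂ)^n • f 1) := by
        rw [ha, hfpow, hfpow]
      have hb2 : ((2:ℂ)^n • (1:A)) • f ((2:ℂ)^n • (1:A)) = (2:ℂ)^n • ((2:ℂ)^n • f 1) := by
        rw [hfpow, smul_assoc, one_smul]
      have hb3 : op ((2:ℂ)^n • (1:A)) • g ((2:ℂ)^n • (1:A))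
          = (2:ℂ)^n • g ((2:ℂ)^n • (1:A)) := by
        rw [op_smul, op_one, smul_assoc, one_smul]
      rw [hb1, hb2, hb3, sub_self, zero_sub, norm_neg, hnsX, hfpow, hnsX] at hc
      have hgle : ‖g ((2:ℂ)^n • (1:A))‖ ≤ θ * ‖f 1‖ := by
        have h2n : (0:ℝ) < 2^n := by positivity
        have hc' : 2^n * ‖g ((2:ℂ)^n • (1:A))‖ ≤ 2^n * (θ * ‖f 1‖) :=
          hc.trans_eq (by ring)
        exact le_of_mul_le_mul_left hc' h2n
      rw [hdn]
      have ht : ((2:ℝ)^n)⁻¹ ≤ r^n := by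
        rw [← inv_pow]
        exact pow_le_pow_left₀ (by norm_num) (le_max_left _ _) n
      calc ((2:ℝ)^n)⁻¹ * ‖g ((2:ℂ)^n • (1:A))‖ ≤ ((2:ℝ)^n)⁻¹ * (θ * ‖f 1‖) :=
            mul_le_mul_of_nonneg_left hgle (by positivity)
        _ ≤ (θ * ‖f 1‖) * r^n := by
            rw [mul_comm]
            exact mul_le_mul_of_nonneg_left ht (by positivity)
    exact tendsto_nhds_unique (hδ 1) (squeeze_zero_norm hb (hgeo _))
  -- g = δ
  have hgδ : ∀ a : A, g a = δ a := by
    intro a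
    have h := hδmul a 1
    rw [mul_one, hδ1, smul_zero, zero_add, op_one, one_smul] at h
    exact h.symm
  -- Jordan property
  have hjordan : ∀ a : A, δ (a ^ 2) = a • δ a + op a • δ a := by
    intro a
    rw [pow_two, hδmul a a, hgδ a]
  exact ⟨δ, hδ, hδadd, hδsmul, hjordan⟩
end
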